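/- arXiv:2106.13692 — 5 statements merged into one kernel-verified Lean document; each statement's English description precedes it below -/
import Mathlib

section
/- Suppose t_1,…,t_{m-1} ∈ (0,1), t_m = 1, and weights w_1,…,w_m > 0 give a quadrature rule exact for all polynomials of degree up to 2m-2 on [0,1] (Gauss-Radau with endpoint 1). Then r_m(x) := Σ_{i=1}^m w_i (x-1)/(t_i(x-1)+1) satisfies ln(x) - r_m(x) = O((x-1)^{2m}) as x → 1; more precisely, for |x-1| < min_i 1/t_i, the power series of ln(x) - r_m(x) around x = 1 has vanishing coefficients for all powers (x-1)^k with k ≤ 2m-1. -/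
theorem stmt_4 (m : ℕ) (hm : 0 < m) (t w : Fin m → ℝ)
    (ht : ∀ i, t i ∈ Set.Ioc (0:ℝ) 1) (htop : ∃ i, t i = 1) (hw : ∀ i, 0 < w i)
    (hquad : ∀ p : Polynomial ℝ, p.natDegree ≤ 2 * m - 2 →
      ∫ s in (0:ℝ)..1, p.eval s = ∑ i, w i * p.eval (t i)) :
    ∃ c : ℕ → ℝ, (∀ k, k ≤ 2 * m - 1 → c k = 0) ∧
      ∀ x : ℝ, (∀ i, |x - 1| * t i < 1) →
        HasSum (fun k => c k * (x - 1) ^ k)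
          (Real.log x - ∑ i, w i * ((x - 1) / (t i * (x - 1) + 1))) := by
  set c : ℕ → ℝ := fun k =>
    if k = 0 then 0 else (-1) ^ (k - 1) * (1 / (k : ℝ) - ∑ i, w i * t i ^ (k - 1)) with hcdef
  have hc : ∀ n : ℕ, c (n + 1) = (-1) ^ n * (1 / ((n : ℝ) + 1) - ∑ i, w i * t i ^ n) := by
    intro n
    simp only [hcdef, Nat.add_eq_zero, and_false, if_false, Nat.add_sub_cancel, one_ne_zero]
    push_cast
    ring_nf
  refine ⟨c, ?_, ?_⟩
  · rintro (_ | k) hk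
    · simp [hcdef]
    · have hk' : k ≤ 2 * m - 2 := by omega
      have hq := hquad (Polynomial.X ^ k) (by simpa using hk')
      simp only [Polynomial.eval_pow, Polynomial.eval_X] at hq
      rw [integral_pow] at hq
      rw [hc k, ← hq]
      push_cast
      ring_nf
  · intro x hx
    set y := x - 1 with hy
    have hy1 : |y| < 1 := by
      obtain ⟨i, hi⟩ := htop
      have := hx i; rwa [hi, mul_one] at this
    have hlog : HasSum (fun k : ℕ => (-1) ^ k * y ^ (k + 1) / (k + 1)) (Real.log x) := by
      have h := (Real.hasSum_pow_div_log_of_abs_lt_one (x := -y) (by rwa [abs_neg])).neg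
      have hx1 : (1:ℝ) - -y = x := by rw [hy]; ring
      rw [hx1, neg_neg] at h
      convert h using 2 with k
      case e'_3 => rfl
      rw [show -y = (-1)*y from by ring, mul_pow]
      ring
    have hgeo : ∀ i, HasSum (fun k : ℕ => w i * y * (-(t i) * y) ^ k)
        (w i * (y / (t i * y + 1))) := by
      intro i
      have habs : |(-(t i) * y)| < 1 := by
        rw [abs_mul, abs_neg, abs_of_pos (ht i).1, mul_comm]
        exact hx i
      have h := (hasSum_geometric_of_abs_lt_one habs).mul_left (w i * y)
      have h1 : (1:ℝ) - -(t i) * y = t i * y + 1 := by ring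
      rw [h1] at h
      simpa [div_eq_mul_inv, mul_assoc] using h
    have hsum := (hlog.sub (hasSum_sum (s := Finset.univ) fun i _ => hgeo i))
    have heq : ∀ k : ℕ, (-1) ^ k * y ^ (k + 1) / (k + 1) - ∑ i, w i * y * (-(t i) * y) ^ k
        = c (k + 1) * y ^ (k + 1) := by
      intro k
      rw [hc k]
      have h1 : ∀ i : Fin m, w i * y * (-t i * y) ^ k = (-1) ^ k * y ^ (k + 1) * (w i * t i ^ k) := by
        intro i
        rw [show -t i * y = (-1) * (t i * y) from by ring, mul_pow, mul_pow]
        ring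
      rw [Finset.sum_congr rfl fun i _ => h1 i, ← Finset.mul_sum]
      ring
    simp only [heq] at hsum
    have hfin := (hasSum_nat_add_iff (f := fun k : ℕ => c k * y ^ k) 1).mp hsum
    simpa [hcdef] using hfin
end

section
/- Let A, B be commuting positive semidefinite operators on a finite-dimensional complex inner product space H, and suppose A+B is invertible. Then for any vector x ∈ H, ⟨x, (A:B)x⟩ = min over all decompositions y + z = x of ⟨y, Ay⟩ + ⟨z, Bz⟩, where A:B := A(A+B)^{-1}B is the parallel sum; moreover, for any y,z with y+z=x, ⟨x,(A:B)x⟩ = ⟨y,Ay⟩ + ⟨z,Bz⟩ − ⟨u,(A+B)u⟩ where u = (A+B)^{-1}Bx − y. -/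
open Matrix ComplexOrder

theorem stmt_6 {n : ℕ} (A B : Matrix (Fin n) (Fin n) ℂ)
    (hA : A.PosSemidef) (hB : B.PosSemidef) (hcomm : A * B = B * A)
    (hinv : IsUnit (A + B)) (x : Fin n → ℂ) :
    (∀ y z : Fin n → ℂ, y + z = x →
      star x ⬝ᵥ ((A * (A + B)⁻¹ * B) *ᵥ x) =
        star y ⬝ᵥ (A *ᵥ y) + star z ⬝ᵥ (B *ᵥ z)
          - star ((A + B)⁻¹ *ᵥ (B *ᵥ x) - y) ⬝ᵥ
              ((A + B) *ᵥ ((A + B)⁻¹ *ᵥ (B *ᵥ x) - y))) ∧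
    IsLeast {v : ℝ | ∃ y z : Fin n → ℂ, y + z = x ∧
        v = (star y ⬝ᵥ (A *ᵥ y) + star z ⬝ᵥ (B *ᵥ z)).re}
      ((star x ⬝ᵥ ((A * (A + B)⁻¹ * B) *ᵥ x)).re) := by
  have hS : (A + B).PosSemidef := hA.add hB
  have hdet : IsUnit (A + B).det := (Matrix.isUnit_iff_isUnit_det _).mp hinv
  have hSC : (A + B) * (A + B)⁻¹ = 1 := Matrix.mul_nonsing_inv _ hdet
  have hCS : (A + B)⁻¹ * (A + B) = 1 := Matrix.nonsing_inv_mul _ hdet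
  have hCH : ((A + B)⁻¹).IsHermitian := hS.isHermitian.inv
  have h2 : ∀ v : Fin n → ℂ, (A + B) *ᵥ ((A + B)⁻¹ *ᵥ v) = v := by
    intro v; rw [Matrix.mulVec_mulVec, hSC, Matrix.one_mulVec]
  have h2' : ∀ v : Fin n → ℂ, (A + B)⁻¹ *ᵥ ((A + B) *ᵥ v) = v := by
    intro v; rw [Matrix.mulVec_mulVec, hCS, Matrix.one_mulVec]
  have hC1 : ∀ v w : Fin n → ℂ,
      star ((A + B)⁻¹ *ᵥ v) ⬝ᵥ w = star v ⬝ᵥ ((A + B)⁻¹ *ᵥ w) := by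
    intro v w
    rw [Matrix.star_mulVec, hCH.eq, ← Matrix.dotProduct_mulVec]
  have hB1 : ∀ v w : Fin n → ℂ,
      star (B *ᵥ v) ⬝ᵥ w = star v ⬝ᵥ (B *ᵥ w) := by
    intro v w
    rw [Matrix.star_mulVec, hB.isHermitian.eq, ← Matrix.dotProduct_mulVec]
  -- the main identity
  have key : ∀ y z : Fin n → ℂ, y + z = x →
      star x ⬝ᵥ ((A * (A + B)⁻¹ * B) *ᵥ x) =
        star y ⬝ᵥ (A *ᵥ y) + star z ⬝ᵥ (B *ᵥ z)
          - star ((A + B)⁻¹ *ᵥ (B *ᵥ x) - y) ⬝ᵥ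
              ((A + B) *ᵥ ((A + B)⁻¹ *ᵥ (B *ᵥ x) - y)) := by
    intro y z hyz
    have hz : z = x - y := by rw [← hyz]; abel
    subst hz
    have e1 : star x ⬝ᵥ ((A * (A + B)⁻¹ * B) *ᵥ x) =
        star x ⬝ᵥ (B *ᵥ x) - star x ⬝ᵥ (B *ᵥ ((A + B)⁻¹ *ᵥ (B *ᵥ x))) := by
      have hm : A * (A + B)⁻¹ * B = B - B * ((A + B)⁻¹ * B) := by
        have h : ((A + B) - B) * (A + B)⁻¹ * B = B - B * ((A + B)⁻¹ * B) := by
          rw [Matrix.sub_mul, Matrix.sub_mul, hSC, Matrix.one_mul, Matrix.mul_assoc]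
        rw [← h, add_sub_cancel_right]
      rw [hm]
      simp [Matrix.sub_mulVec, Matrix.mulVec_mulVec, dotProduct_sub, Matrix.mul_assoc]
    rw [e1]
    simp only [Matrix.mulVec_sub, Matrix.mulVec_add, star_sub,
      dotProduct_sub, sub_dotProduct, dotProduct_add, add_dotProduct, h2, h2', hC1, hB1]
    simp only [Matrix.add_mulVec, dotProduct_add, Matrix.mulVec_add, h2, h2', hC1, hB1]
    ring
  refine ⟨key, ?_, ?_⟩
  · -- membership: take y = (A+B)⁻¹ B x
    refine ⟨(A + B)⁻¹ *ᵥ (B *ᵥ x), x - (A + B)⁻¹ *ᵥ (B *ᵥ x), by abel, ?_⟩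
    have := key ((A + B)⁻¹ *ᵥ (B *ᵥ x)) (x - (A + B)⁻¹ *ᵥ (B *ᵥ x)) (by abel)
    rw [this]
    simp
  · rintro v ⟨y, z, hyz, rfl⟩
    rw [key y z hyz]
    have hpos := hS.dotProduct_mulVec_nonneg ((A + B)⁻¹ *ᵥ (B *ᵥ x) - y)
    have : 0 ≤ (star ((A + B)⁻¹ *ᵥ (B *ᵥ x) - y) ⬝ᵥ
        ((A + B) *ᵥ ((A + B)⁻¹ *ᵥ (B *ᵥ x) - y))).re := by
      simpa using (Complex.le_def.mp hpos).1
    simp only [Complex.sub_re]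
    linarith
end

section
/- Let t ∈ (0,1) and let ρ, σ be positive semidefinite matrices on a finite-dimensional Hilbert space with ρ ≤ λσ. Then the operator equation (1-t) Z ρ + t σ Z = ρ has a solution Z with operator norm ‖Z‖ ≤ max( 3/(2(1-t)), 3λ/(2t) ). -/
open Matrix ComplexOrder MeasureTheory Real Set ComplexConjugate

namespace Stmt9Aux

lemma integral_exp_neg_mul_Ioi {b : ℝ} (hb : 0 < b) :
    ∫ τ in Ioi (0:ℝ), Real.exp (-(b * τ)) = 1 / b := by
  have h := integral_comp_mul_left_Ioi (fun x => Real.exp (-x)) 0 hb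
  simp only [mul_zero, smul_eq_mul] at h
  have : (∫ x in Ioi (0:ℝ), Real.exp (-(b * x))) = ∫ x in Ioi (0:ℝ), (fun x => Real.exp (-x)) (b * x) := rfl
  rw [this, h, integral_exp_neg_Ioi]
  simp [one_div]

lemma integrableOn_exp_term {c : ℝ} (hc : 0 < c) :
    IntegrableOn (fun τ : ℝ => Real.exp (-(c * τ))) (Ioi (0:ℝ)) := by
  simpa [neg_mul] using exp_neg_integrableOn_Ioi 0 hc

lemma integral_sum_exp_real {ι : Type*} [Fintype ι] (C : ι → ℝ) (c : ι → ℝ)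
    (h : ∀ k, 0 < c k ∨ C k = 0) :
    IntegrableOn (fun τ : ℝ => ∑ k, C k * Real.exp (-(c k * τ))) (Ioi (0:ℝ)) ∧
      ∫ τ in Ioi (0:ℝ), (∑ k, C k * Real.exp (-(c k * τ))) = ∑ k, C k * (1 / c k) := by
  have hterm : ∀ k, IntegrableOn (fun τ : ℝ => C k * Real.exp (-(c k * τ))) (Ioi (0:ℝ)) := by
    intro k
    rcases h k with hk | hk
    · exact (integrableOn_exp_term hk).const_mul _
    · simp [hk]
  constructor
  · exact integrable_finset_sum _ (fun k _ => hterm k)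
  · rw [integral_finset_sum _ (fun k _ => hterm k)]
    refine Finset.sum_congr rfl fun k _ => ?_
    rcases h k with hk | hk
    · rw [MeasureTheory.integral_const_mul, integral_exp_neg_mul_Ioi hk]
    · simp [hk]

lemma integral_sum_exp_complex {ι : Type*} [Fintype ι] (C : ι → ℂ) (c : ι → ℝ)
    (h : ∀ k, 0 < c k ∨ C k = 0) :
    IntegrableOn (fun τ : ℝ => ∑ k, C k * (Real.exp (-(c k * τ)) : ℂ)) (Ioi (0:ℝ)) ∧
      ∫ τ in Ioi (0:ℝ), (∑ k, C k * (Real.exp (-(c k * τ)) : ℂ)) = ∑ k, C k * ((1 / c k : ℝ) : ℂ) := by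
  have hterm : ∀ k, IntegrableOn (fun τ : ℝ => C k * (Real.exp (-(c k * τ)) : ℂ)) (Ioi (0:ℝ)) := by
    intro k
    rcases h k with hk | hk
    · exact ((integrableOn_exp_term hk).ofReal (𝕜 := ℂ)).const_mul _
    · simp [hk]
  constructor
  · exact integrable_finset_sum _ (fun k _ => hterm k)
  · rw [integral_finset_sum _ (fun k _ => hterm k)]
    refine Finset.sum_congr rfl fun k _ => ?_
    rcases h k with hk | hk
    · rw [MeasureTheory.integral_const_mul]
      congr 1
      rw [← integral_exp_neg_mul_Ioi hk]
      exact integral_ofReal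
    · simp [hk]

lemma sqrt_amgm {p q ε : ℝ} (hp : 0 ≤ p) (hq : 0 ≤ q) (hε : 0 < ε) :
    Real.sqrt p * Real.sqrt q ≤ (ε * p + q / ε) / 2 := by
  have h1 : Real.sqrt p ^ 2 = p := Real.sq_sqrt hp
  have h2 : Real.sqrt q ^ 2 = q := Real.sq_sqrt hq
  have h4 : 2 * ε * (Real.sqrt p * Real.sqrt q) ≤ ε ^ 2 * p + q := by
    nlinarith [sq_nonneg (ε * Real.sqrt p - Real.sqrt q)]
  calc Real.sqrt p * Real.sqrt q = (2 * ε * (Real.sqrt p * Real.sqrt q)) / (2 * ε) := by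
        field_simp
    _ ≤ (ε ^ 2 * p + q) / (2 * ε) := by
        exact div_le_div_of_nonneg_right h4 (by positivity) |>.trans_eq rfl
    _ = (ε * p + q / ε) / 2 := by field_simp

lemma le_sqrt_mul_sqrt {S X Y : ℝ} (hX : 0 ≤ X) (hY : 0 ≤ Y)
    (h : ∀ ε : ℝ, 0 < ε → S ≤ (ε * X + Y / ε) / 2) :
    S ≤ Real.sqrt X * Real.sqrt Y := by
  rcases eq_or_lt_of_le hX with hX0 | hX0
  · by_contra hS
    push_neg at hS
    have hS0 : 0 < S := lt_of_le_of_lt (by positivity) hS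
    rcases eq_or_lt_of_le hY with hY0 | hY0
    · have := h 1 one_pos
      rw [← hX0, ← hY0] at this
      simp at this
      linarith
    · have h4 := h (Y / S) (by positivity)
      rw [← hX0] at h4
      have hYS : Y / (Y / S) = S := by field_simp
      rw [mul_zero, zero_add, hYS] at h4
      linarith
  · rcases eq_or_lt_of_le hY with hY0 | hY0
    · by_contra hS
      push_neg at hS
      have hS0 : 0 < S := lt_of_le_of_lt (by positivity) hS
      have h4 := h (S / X) (by positivity)
      rw [← hY0] at h4
      have hx : S / X * X = S := div_mul_cancel₀ S hX0.ne'
      rw [hx, zero_div, add_zero] at h4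
      linarith
    · have hsX : (0:ℝ) < Real.sqrt X := Real.sqrt_pos.mpr hX0
      have hsY : (0:ℝ) < Real.sqrt Y := Real.sqrt_pos.mpr hY0
      have h4 := h (Real.sqrt Y / Real.sqrt X) (by positivity)
      have m1 : Real.sqrt X * Real.sqrt X = X := Real.mul_self_sqrt hX
      have m2 : Real.sqrt Y * Real.sqrt Y = Y := Real.mul_self_sqrt hY
      have e1 : Real.sqrt Y / Real.sqrt X * X = Real.sqrt Y * Real.sqrt X := by
        field_simp
        rw [sq, m1]
      have e2 : Y / (Real.sqrt Y / Real.sqrt X) = Real.sqrt Y * Real.sqrt X := by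
        field_simp
        linear_combination -m2
      rw [e1, e2] at h4
      linarith

lemma quad_form {n : ℕ} (U : Matrix (Fin n) (Fin n) ℂ) (d : Fin n → ℝ) (v : Fin n → ℂ) :
    star v ⬝ᵥ ((U * Matrix.diagonal (fun i => (d i : ℂ)) * Uᴴ) *ᵥ v)
      = ((∑ i, d i * Complex.normSq ((Uᴴ *ᵥ v) i) : ℝ) : ℂ) := by
  have hst : star v ᵥ* U = star (Uᴴ *ᵥ v) := by
    rw [Matrix.star_mulVec, conjTranspose_conjTranspose]
  rw [← Matrix.mulVec_mulVec, ← Matrix.mulVec_mulVec, Matrix.dotProduct_mulVec, hst]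
  push_cast
  rw [dotProduct]
  refine Finset.sum_congr rfl fun i _ => ?_
  rw [Matrix.mulVec_diagonal]
  rw [show (star (Uᴴ *ᵥ v)) i * ((d i : ℂ) * (Uᴴ *ᵥ v) i)
      = (d i : ℂ) * ((Uᴴ *ᵥ v) i * conj ((Uᴴ *ᵥ v) i)) by
    simp [Pi.star_apply, RCLike.star_def]; ring]
  rw [Complex.mul_conj]

lemma dot_self_eq {n : ℕ} (v : Fin n → ℂ) :
    star v ⬝ᵥ v = ((∑ i, Complex.normSq (v i) : ℝ) : ℂ) := by
  push_cast
  rw [dotProduct]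
  refine Finset.sum_congr rfl fun i _ => ?_
  rw [show (star v) i * v i = v i * conj (v i) by simp [Pi.star_apply, RCLike.star_def]; ring]
  rw [Complex.mul_conj]

end Stmt9Aux

open Stmt9Aux

set_option maxHeartbeats 2000000 in
theorem stmt_9 {n : ℕ} (t lam : ℝ) (ht : t ∈ Set.Ioo (0:ℝ) 1) (hlam : 0 ≤ lam)
    (ρ σ : Matrix (Fin n) (Fin n) ℂ) (hρ : ρ.PosSemidef) (hσ : σ.PosSemidef)
    (hle : ((lam : ℂ) • σ - ρ).PosSemidef) :
    ∃ Z : Matrix (Fin n) (Fin n) ℂ,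
      ((1 - t : ℝ) : ℂ) • (Z * ρ) + (t : ℂ) • (σ * Z) = ρ ∧
      ‖Matrix.toEuclideanCLM (𝕜 := ℂ) Z‖ ≤ max (3 / (2 * (1 - t))) (3 * lam / (2 * t)) := by
  obtain ⟨ht0, ht1⟩ := ht
  have h1t : 0 < 1 - t := by linarith
  classical
  set V : Matrix (Fin n) (Fin n) ℂ := (hρ.1.eigenvectorUnitary : Matrix (Fin n) (Fin n) ℂ) with hVdef
  set W : Matrix (Fin n) (Fin n) ℂ := (hσ.1.eigenvectorUnitary : Matrix (Fin n) (Fin n) ℂ) with hWdef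
  set r : Fin n → ℝ := hρ.1.eigenvalues with hrdef
  set s : Fin n → ℝ := hσ.1.eigenvalues with hsdef
  have hr : ∀ i, 0 ≤ r i := hρ.eigenvalues_nonneg
  have hs : ∀ j, 0 ≤ s j := hσ.eigenvalues_nonneg
  have hVV : Vᴴ * V = 1 := by
    rw [← Matrix.star_eq_conjTranspose]
    exact (Matrix.mem_unitaryGroup_iff').mp (hρ.1.eigenvectorUnitary).2
  have hVV' : V * Vᴴ = 1 := by
    rw [← Matrix.star_eq_conjTranspose]
    exact (Matrix.mem_unitaryGroup_iff).mp (hρ.1.eigenvectorUnitary).2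
  have hWW : Wᴴ * W = 1 := by
    rw [← Matrix.star_eq_conjTranspose]
    exact (Matrix.mem_unitaryGroup_iff').mp (hσ.1.eigenvectorUnitary).2
  have hWW' : W * Wᴴ = 1 := by
    rw [← Matrix.star_eq_conjTranspose]
    exact (Matrix.mem_unitaryGroup_iff).mp (hσ.1.eigenvectorUnitary).2
  have hρdec : ρ = V * Matrix.diagonal (fun i => (r i : ℂ)) * Vᴴ := by
    have h := hρ.1.spectral_theorem
    rw [← Matrix.star_eq_conjTranspose]
    exact h
  have hσdec : σ = W * Matrix.diagonal (fun j => (s j : ℂ)) * Wᴴ := by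
    have h := hσ.1.spectral_theorem
    rw [← Matrix.star_eq_conjTranspose]
    exact h
  set a : Fin n → ℝ := fun i => (1 - t) * r i with hadef
  set b : Fin n → ℝ := fun j => t * s j with hbdef
  have ha0 : ∀ i, 0 ≤ a i := fun i => mul_nonneg h1t.le (hr i)
  have hb0 : ∀ j, 0 ≤ b j := fun j => mul_nonneg ht0.le (hs j)
  have hrzero : ∀ {i j}, a i + b j = 0 → r i = 0 := by
    intro i j hz
    have h1 : a i = 0 := by linarith [ha0 i, hb0 j]
    have := mul_eq_zero.mp h1
    rcases this with h | h
    · exfalso; linarith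
    · exact h
  set G : Matrix (Fin n) (Fin n) ℂ := Wᴴ * V with hGdef
  set k : Fin n → Fin n → ℝ := fun j i => if a i + b j = 0 then 0 else r i / (a i + b j) with hkdef
  set M : Matrix (Fin n) (Fin n) ℂ := Matrix.of (fun j i => G j i * (k j i : ℂ)) with hMdef
  refine ⟨W * M * Vᴴ, ?_, ?_⟩
  · -- the operator equation
    have keyM : ((1 - t : ℝ) : ℂ) • (M * Matrix.diagonal (fun i => (r i : ℂ)))
        + (t : ℂ) • (Matrix.diagonal (fun j => (s j : ℂ)) * M)
        = G * Matrix.diagonal (fun i => (r i : ℂ)) := by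
      ext j i
      simp only [Matrix.add_apply, Matrix.smul_apply, Matrix.mul_diagonal, Matrix.diagonal_mul,
        hMdef, Matrix.of_apply, smul_eq_mul]
      by_cases hz : a i + b j = 0
      · have hri : r i = 0 := hrzero hz
        simp [hkdef, hz, hri]
      · have hk' : k j i = r i / (a i + b j) := by simp [hkdef, hz]
        have hzc : ((a i + b j : ℝ) : ℂ) ≠ 0 := Complex.ofReal_ne_zero.mpr hz
        have hsc : ((k j i : ℝ) : ℂ) * (((1 - t : ℝ) : ℂ) * (r i : ℂ) + (t : ℂ) * (s j : ℂ))
            = (r i : ℂ) := by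
          rw [hk']
          rw [show ((1 - t : ℝ) : ℂ) * (r i : ℂ) + (t : ℂ) * (s j : ℂ) = ((a i + b j : ℝ) : ℂ) by
            simp only [hadef, hbdef]; push_cast; ring]
          rw [Complex.ofReal_div]
          exact div_mul_cancel₀ _ hzc
        linear_combination G j i * hsc
    have e1 : (W * M * Vᴴ) * ρ = W * (M * Matrix.diagonal (fun i => (r i : ℂ))) * Vᴴ := by
      rw [hρdec]
      calc (W * M * Vᴴ) * (V * Matrix.diagonal (fun i => (r i : ℂ)) * Vᴴ)
          = W * (M * ((Vᴴ * V) * (Matrix.diagonal (fun i => (r i : ℂ)) * Vᴴ))) := by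
            simp only [Matrix.mul_assoc]
        _ = W * (M * Matrix.diagonal (fun i => (r i : ℂ))) * Vᴴ := by
            rw [hVV, one_mul]; simp only [Matrix.mul_assoc]
    have e2 : σ * (W * M * Vᴴ) = W * (Matrix.diagonal (fun j => (s j : ℂ)) * M) * Vᴴ := by
      rw [hσdec]
      calc (W * Matrix.diagonal (fun j => (s j : ℂ)) * Wᴴ) * (W * M * Vᴴ)
          = W * (Matrix.diagonal (fun j => (s j : ℂ)) * ((Wᴴ * W) * (M * Vᴴ))) := by
            simp only [Matrix.mul_assoc]
        _ = W * (Matrix.diagonal (fun j => (s j : ℂ)) * M) * Vᴴ := by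
            rw [hWW, one_mul]; simp only [Matrix.mul_assoc]
    rw [e1, e2]
    have hcollect : ((1 - t : ℝ) : ℂ) • (W * (M * Matrix.diagonal fun i => (r i : ℂ)) * Vᴴ)
        + (t : ℂ) • (W * ((Matrix.diagonal fun j => (s j : ℂ)) * M) * Vᴴ)
        = W * (((1 - t : ℝ) : ℂ) • (M * Matrix.diagonal fun i => (r i : ℂ))
            + (t : ℂ) • ((Matrix.diagonal fun j => (s j : ℂ)) * M)) * Vᴴ := by
      simp only [Matrix.mul_add, Matrix.add_mul, Matrix.mul_smul, Matrix.smul_mul]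
    rw [hcollect, keyM]
    calc W * (G * Matrix.diagonal (fun i => (r i : ℂ))) * Vᴴ
        = (W * Wᴴ) * (V * Matrix.diagonal (fun i => (r i : ℂ)) * Vᴴ) := by
          rw [hGdef]; simp only [Matrix.mul_assoc]
      _ = ρ := by rw [hWW', one_mul, ← hρdec]
  · -- the norm bound
    have hcon : ∀ v : Fin n → ℂ, (star v ⬝ᵥ (ρ *ᵥ v)).re ≤ lam * (star v ⬝ᵥ (σ *ᵥ v)).re := by
      intro v
      have h0 := hle.dotProduct_mulVec_nonneg v
      rw [Matrix.sub_mulVec, Matrix.smul_mulVec, dotProduct_sub,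
        dotProduct_smul] at h0
      have h1 := (Complex.le_def.mp h0).1
      simp only [Complex.zero_re, Complex.sub_re, smul_eq_mul, Complex.re_ofReal_mul] at h1
      linarith
    have hρq : ∀ v : Fin n → ℂ, star v ⬝ᵥ (ρ *ᵥ v)
        = ((∑ i, r i * Complex.normSq ((Vᴴ *ᵥ v) i) : ℝ) : ℂ) := by
      intro v
      rw [hρdec, ← Matrix.mulVec_mulVec, ← Matrix.mulVec_mulVec, Matrix.mulVec_mulVec,
        Matrix.mulVec_mulVec]
      exact quad_form V r v
    have hσq : ∀ v : Fin n → ℂ, star v ⬝ᵥ (σ *ᵥ v)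
        = ((∑ j, s j * Complex.normSq ((Wᴴ *ᵥ v) j) : ℝ) : ℂ) := by
      intro v
      rw [hσdec]
      exact quad_form W s v
    set c₀ : ℝ := Real.sqrt (lam / (2 * t)) * Real.sqrt (1 / (2 * (1 - t))) with hc₀def
    have hc₀ : 0 ≤ c₀ := by positivity
    have master : ∀ u w : Fin n → ℂ, ‖star u ⬝ᵥ ((W * M * Vᴴ) *ᵥ w)‖
        ≤ c₀ * (Real.sqrt (∑ j, Complex.normSq (u j)) * Real.sqrt (∑ i, Complex.normSq (w i))) := by
      intro u w
      set x : Fin n → ℂ := Wᴴ *ᵥ u with hxdef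
      set y : Fin n → ℂ := Vᴴ *ᵥ w with hydef
      have hxstar : star x = star u ᵥ* W := by
        rw [hxdef, Matrix.star_mulVec, conjTranspose_conjTranspose]
      have hS : star u ⬝ᵥ ((W * M * Vᴴ) *ᵥ w) = star x ⬝ᵥ (M *ᵥ y) := by
        rw [← Matrix.mulVec_mulVec, ← Matrix.mulVec_mulVec, Matrix.dotProduct_mulVec, hxstar,
          hydef]
      have hxnorm : (∑ j, Complex.normSq (x j)) = ∑ j, Complex.normSq (u j) := by
        have e : star x ⬝ᵥ x = star u ⬝ᵥ u := by
          rw [hxstar, hxdef, Matrix.dotProduct_mulVec, Matrix.vecMul_vecMul, hWW',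
            Matrix.vecMul_one]
        rw [dot_self_eq, dot_self_eq] at e
        exact_mod_cast e
      have hynorm : (∑ i, Complex.normSq (y i)) = ∑ i, Complex.normSq (w i) := by
        have e : star y ⬝ᵥ y = star w ⬝ᵥ w := by
          rw [show star y = star w ᵥ* V by
              rw [hydef, Matrix.star_mulVec, conjTranspose_conjTranspose],
            hydef, Matrix.dotProduct_mulVec, Matrix.vecMul_vecMul, hVV', Matrix.vecMul_one]
        rw [dot_self_eq, dot_self_eq] at e
        exact_mod_cast e
      rw [hS, ← hxnorm, ← hynorm]
      set nx := ∑ j, Complex.normSq (x j) with hnx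
      set ny := ∑ i, Complex.normSq (y i) with hny
      have hnx0 : 0 ≤ nx := Finset.sum_nonneg fun _ _ => Complex.normSq_nonneg _
      have hny0 : 0 ≤ ny := Finset.sum_nonneg fun _ _ => Complex.normSq_nonneg _
      set C : Fin n × Fin n → ℂ := fun p => conj (x p.1) * G p.1 p.2 * y p.2 * (r p.2 : ℂ)
        with hCdef
      set c : Fin n × Fin n → ℝ := fun p => a p.2 + b p.1 with hcdef
      have hcC : ∀ p, 0 < c p ∨ C p = 0 := by
        intro p
        rcases (add_nonneg (ha0 p.2) (hb0 p.1)).lt_or_eq with h | h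
        · exact Or.inl h
        · refine Or.inr ?_
          have hri : r p.2 = 0 := hrzero h.symm
          simp [hCdef, hri]
      have hSsum : star x ⬝ᵥ (M *ᵥ y) = ∑ p : Fin n × Fin n, C p * ((1 / c p : ℝ) : ℂ) := by
        simp only [dotProduct, Matrix.mulVec, Finset.mul_sum, Fintype.sum_prod_type]
        refine Finset.sum_congr rfl fun j _ => Finset.sum_congr rfl fun i _ => ?_
        by_cases hz : a i + b j = 0
        · have hri : r i = 0 := hrzero hz
          simp [hMdef, hkdef, hz, hCdef, hri]
        · have hk' : k j i = r i / (a i + b j) := by simp [hkdef, hz]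
          have hzc : ((a i : ℂ)) + ((b j : ℂ)) ≠ 0 := by
            rw [← Complex.ofReal_add]
            exact Complex.ofReal_ne_zero.mpr hz
          simp only [hMdef, Matrix.of_apply, hCdef, hcdef, hk', Pi.star_apply, RCLike.star_def]
          push_cast
          field_simp
      obtain ⟨hHint, hHval⟩ := integral_sum_exp_complex C c hcC
      set f : ℝ → EuclideanSpace ℂ (Fin n) := fun τ => WithLp.toLp 2 fun i =>
        (Real.sqrt (r i) : ℂ) * ∑ j, conj (G j i) * x j * (Real.exp (-(b j * τ)) : ℂ) with hfdef
      set g : ℝ → EuclideanSpace ℂ (Fin n) := fun τ => WithLp.toLp 2 fun i =>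
        (Real.sqrt (r i) : ℂ) * y i * (Real.exp (-(a i * τ)) : ℂ) with hgdef
      have hHfg : ∀ τ : ℝ, (∑ p : Fin n × Fin n, C p * (Real.exp (-(c p * τ)) : ℂ))
          = inner ℂ (f τ) (g τ) := by
        intro τ
        rw [PiLp.inner_apply]
        simp only [RCLike.inner_apply]
        rw [Fintype.sum_prod_type, Finset.sum_comm]
        refine Finset.sum_congr rfl fun i _ => ?_
        have hfconj : conj (f τ i)
            = (Real.sqrt (r i) : ℂ) * ∑ j, G j i * conj (x j) * (Real.exp (-(b j * τ)) : ℂ) := by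
          simp only [hfdef, _root_.map_mul, map_sum, Complex.conj_ofReal, Complex.conj_conj]
        rw [hfconj]
        simp only [hgdef]
        rw [mul_comm ((Real.sqrt (r i) : ℂ)) (∑ j, G j i * conj (x j) * (Real.exp (-(b j * τ)) : ℂ))]
        simp only [Finset.sum_mul, Finset.mul_sum]
        refine Finset.sum_congr rfl fun j _ => ?_
        have hrr : (Real.sqrt (r i) : ℂ) * (Real.sqrt (r i) : ℂ) = ((r i : ℝ) : ℂ) := by
          rw [← Complex.ofReal_mul, Real.mul_self_sqrt (hr i)]
        have hee : (Real.exp (-(b j * τ)) : ℂ) * (Real.exp (-(a i * τ)) : ℂ)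
            = (Real.exp (-((a i + b j) * τ)) : ℂ) := by
          rw [← Complex.ofReal_mul, ← Real.exp_add]
          norm_cast
          congr 1
          ring
        simp only [hCdef, hcdef]
        rw [← hrr, ← hee]
        ring
      -- bounds on the two quadratic integrands
      set Rf : ℝ → ℝ := fun τ => ∑ j, lam * s j * Complex.normSq (x j) * Real.exp (-(2 * b j * τ))
        with hRdef
      set Qf : ℝ → ℝ := fun τ => ∑ i, r i * Complex.normSq (y i) * Real.exp (-(2 * a i * τ))
        with hQdef
      have hRf0 : ∀ τ, 0 ≤ Rf τ := fun τ => Finset.sum_nonneg fun j _ =>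
        mul_nonneg (mul_nonneg (mul_nonneg hlam (hs j)) (Complex.normSq_nonneg _))
          (Real.exp_pos _).le
      have hQf0 : ∀ τ, 0 ≤ Qf τ := fun τ => Finset.sum_nonneg fun i _ =>
        mul_nonneg (mul_nonneg (hr i) (Complex.normSq_nonneg _)) (Real.exp_pos _).le
      have hgval : ∀ τ, ‖g τ‖ ^ 2 = Qf τ := by
        intro τ
        rw [EuclideanSpace.norm_eq, Real.sq_sqrt (Finset.sum_nonneg fun i _ => by positivity)]
        refine Finset.sum_congr rfl fun i _ => ?_
        rw [Complex.sq_norm]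
        simp only [hgdef, Complex.normSq_mul, Complex.normSq_ofReal]
        rw [Real.mul_self_sqrt (hr i),
          show Real.exp (-(a i * τ)) * Real.exp (-(a i * τ)) = Real.exp (-(2 * a i * τ)) by
            rw [← Real.exp_add]; congr 1; ring]
      have hfle : ∀ τ, ‖f τ‖ ^ 2 ≤ Rf τ := by
        intro τ
        set ξ : Fin n → ℂ := fun j => x j * (Real.exp (-(b j * τ)) : ℂ) with hξdef
        set v : Fin n → ℂ := W *ᵥ ξ with hvdef
        have hVv : Vᴴ *ᵥ v = fun i => ∑ j, conj (G j i) * x j * (Real.exp (-(b j * τ)) : ℂ) := by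
          funext i
          rw [hvdef, Matrix.mulVec_mulVec]
          simp only [Matrix.mulVec, dotProduct, hξdef]
          refine Finset.sum_congr rfl fun j _ => ?_
          have hGT : (Vᴴ * W) i j = conj (G j i) := by
            rw [hGdef, show Vᴴ * W = (Wᴴ * V)ᴴ by
              rw [Matrix.conjTranspose_mul, conjTranspose_conjTranspose],
              Matrix.conjTranspose_apply, RCLike.star_def]
          simp only [hGT]
          ring
        have hWv : Wᴴ *ᵥ v = ξ := by
          rw [hvdef, Matrix.mulVec_mulVec, hWW, Matrix.one_mulVec]
        have hfv : ∀ i, f τ i = (Real.sqrt (r i) : ℂ) * (Vᴴ *ᵥ v) i := by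
          intro i
          rw [hVv]
        have hP : ‖f τ‖ ^ 2 = (star v ⬝ᵥ (ρ *ᵥ v)).re := by
          rw [hρq v, Complex.ofReal_re, EuclideanSpace.norm_eq,
            Real.sq_sqrt (Finset.sum_nonneg fun i _ => by positivity)]
          refine Finset.sum_congr rfl fun i _ => ?_
          rw [Complex.sq_norm, hfv i, Complex.normSq_mul,
            Complex.normSq_ofReal, Real.mul_self_sqrt (hr i)]
        have hQσ : (star v ⬝ᵥ (σ *ᵥ v)).re
            = ∑ j, s j * Complex.normSq (x j) * Real.exp (-(2 * b j * τ)) := by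
          rw [hσq v, Complex.ofReal_re, hWv]
          refine Finset.sum_congr rfl fun j _ => ?_
          simp only [hξdef, Complex.normSq_mul, Complex.normSq_ofReal]
          rw [show Real.exp (-(b j * τ)) * Real.exp (-(b j * τ)) = Real.exp (-(2 * b j * τ)) by
            rw [← Real.exp_add]; congr 1; ring]
          ring
        rw [hP]
        calc (star v ⬝ᵥ (ρ *ᵥ v)).re ≤ lam * (star v ⬝ᵥ (σ *ᵥ v)).re := hcon v
          _ = Rf τ := by
              rw [hQσ, hRdef, Finset.mul_sum]
              exact Finset.sum_congr rfl fun j _ => by ring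
      -- integral bounds
      have hRcond : ∀ j : Fin n, 0 < 2 * b j ∨ lam * s j * Complex.normSq (x j) = 0 := by
        intro j
        rcases (hb0 j).lt_or_eq with h | h
        · exact Or.inl (by linarith)
        · have hsj : s j = 0 := by
            rcases mul_eq_zero.mp h.symm with h' | h'
            · exact absurd h' (ne_of_gt ht0)
            · exact h'
          exact Or.inr (by rw [hsj]; ring)
      have hQcond : ∀ i : Fin n, 0 < 2 * a i ∨ r i * Complex.normSq (y i) = 0 := by
        intro i
        rcases (ha0 i).lt_or_eq with h | h
        · exact Or.inl (by linarith)
        · have hri : r i = 0 := by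
            rcases mul_eq_zero.mp h.symm with h' | h'
            · exfalso; linarith
            · exact h'
          exact Or.inr (by rw [hri]; ring)
      obtain ⟨hRint, hRval⟩ := integral_sum_exp_real _ _ hRcond
      obtain ⟨hQint, hQval⟩ := integral_sum_exp_real _ _ hQcond
      have hRint' : IntegrableOn Rf (Ioi (0:ℝ)) := by rw [hRdef]; exact hRint
      have hQint' : IntegrableOn Qf (Ioi (0:ℝ)) := by rw [hQdef]; exact hQint
      have hRbound : (∫ τ in Ioi (0:ℝ), Rf τ) ≤ lam / (2 * t) * nx := by
        rw [hRdef]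
        rw [show (∫ τ in Ioi (0:ℝ),
              ∑ j, lam * s j * Complex.normSq (x j) * Real.exp (-(2 * b j * τ)))
            = ∑ j, lam * s j * Complex.normSq (x j) * (1 / (2 * b j)) from hRval]
        rw [hnx, Finset.mul_sum]
        refine Finset.sum_le_sum fun j _ => ?_
        rcases (hs j).lt_or_eq with h | h
        · simp only [hbdef]
          apply le_of_eq
          field_simp
        · rw [← h, mul_zero, zero_mul, zero_mul]
          exact mul_nonneg (div_nonneg hlam (by linarith)) (Complex.normSq_nonneg _)
      have hQbound : (∫ τ in Ioi (0:ℝ), Qf τ) ≤ 1 / (2 * (1 - t)) * ny := by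
        rw [hQdef]
        rw [show (∫ τ in Ioi (0:ℝ),
              ∑ i, r i * Complex.normSq (y i) * Real.exp (-(2 * a i * τ)))
            = ∑ i, r i * Complex.normSq (y i) * (1 / (2 * a i)) from hQval]
        rw [hny, Finset.mul_sum]
        refine Finset.sum_le_sum fun i _ => ?_
        rcases (hr i).lt_or_eq with h | h
        · simp only [hadef]
          apply le_of_eq
          field_simp
        · rw [← h, zero_mul, zero_mul]
          exact mul_nonneg (div_nonneg zero_le_one (by linarith)) (Complex.normSq_nonneg _)
      -- assemble
      have hfinal : ∀ ε : ℝ, 0 < ε → ‖star x ⬝ᵥ (M *ᵥ y)‖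
          ≤ (ε * (lam / (2 * t) * nx) + (1 / (2 * (1 - t)) * ny) / ε) / 2 := by
        intro ε hε
        have hbnd : ∀ τ : ℝ, ‖∑ p : Fin n × Fin n, C p * (Real.exp (-(c p * τ)) : ℂ)‖
            ≤ (ε * Rf τ + Qf τ / ε) / 2 := by
          intro τ
          calc ‖∑ p : Fin n × Fin n, C p * (Real.exp (-(c p * τ)) : ℂ)‖
              = ‖(inner ℂ (f τ) (g τ) : ℂ)‖ := by rw [hHfg τ]
            _ ≤ ‖f τ‖ * ‖g τ‖ := norm_inner_le_norm _ _
            _ = Real.sqrt (‖f τ‖ ^ 2) * Real.sqrt (‖g τ‖ ^ 2) := by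
                rw [Real.sqrt_sq (norm_nonneg _), Real.sqrt_sq (norm_nonneg _)]
            _ ≤ Real.sqrt (Rf τ) * Real.sqrt (Qf τ) := by
                exact mul_le_mul (Real.sqrt_le_sqrt (hfle τ))
                  (Real.sqrt_le_sqrt (le_of_eq (hgval τ))) (Real.sqrt_nonneg _)
                  (Real.sqrt_nonneg _)
            _ ≤ (ε * Rf τ + Qf τ / ε) / 2 := sqrt_amgm (hRf0 τ) (hQf0 τ) hε
        have hg_int : IntegrableOn (fun τ => (ε * Rf τ + Qf τ / ε) / 2) (Ioi (0:ℝ)) :=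
          ((hRint'.const_mul ε).add (hQint'.div_const ε)).div_const 2
        calc ‖star x ⬝ᵥ (M *ᵥ y)‖
            = ‖∫ τ in Ioi (0:ℝ), ∑ p : Fin n × Fin n, C p * (Real.exp (-(c p * τ)) : ℂ)‖ := by
              rw [hSsum, ← hHval]
          _ ≤ ∫ τ in Ioi (0:ℝ), (ε * Rf τ + Qf τ / ε) / 2 :=
              MeasureTheory.norm_integral_le_of_norm_le hg_int (MeasureTheory.ae_of_all _ hbnd)
          _ = ((ε * ∫ τ in Ioi (0:ℝ), Rf τ) + (∫ τ in Ioi (0:ℝ), Qf τ) / ε) / 2 := by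
              rw [integral_div, integral_add (hRint'.const_mul ε) (hQint'.div_const ε),
                MeasureTheory.integral_const_mul, integral_div]
          _ ≤ (ε * (lam / (2 * t) * nx) + (1 / (2 * (1 - t)) * ny) / ε) / 2 := by
              have h1 : ε * (∫ τ in Ioi (0:ℝ), Rf τ) ≤ ε * (lam / (2 * t) * nx) :=
                mul_le_mul_of_nonneg_left hRbound hε.le
              have h2 : (∫ τ in Ioi (0:ℝ), Qf τ) / ε ≤ (1 / (2 * (1 - t)) * ny) / ε :=
                div_le_div_of_nonneg_right hQbound hε.le
              linarith
      have hfin := le_sqrt_mul_sqrt (X := lam / (2 * t) * nx) (Y := 1 / (2 * (1 - t)) * ny)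
        (mul_nonneg (div_nonneg hlam (by linarith)) hnx0)
        (mul_nonneg (div_nonneg zero_le_one (by linarith)) hny0) hfinal
      calc ‖star x ⬝ᵥ (M *ᵥ y)‖
          ≤ Real.sqrt (lam / (2 * t) * nx) * Real.sqrt (1 / (2 * (1 - t)) * ny) := hfin
        _ = c₀ * (Real.sqrt nx * Real.sqrt ny) := by
            rw [Real.sqrt_mul (div_nonneg hlam (by linarith)) nx,
              Real.sqrt_mul (div_nonneg zero_le_one (by linarith)) ny, hc₀def]
            ring
    have hbound : ‖Matrix.toEuclideanCLM (𝕜 := ℂ) (W * M * Vᴴ)‖ ≤ c₀ := by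
      refine ContinuousLinearMap.opNorm_le_bound _ hc₀ (fun w => ?_)
      set T := Matrix.toEuclideanCLM (𝕜 := ℂ) (W * M * Vᴴ) with hTdef
      set u : Fin n → ℂ := fun j => T w j with hudef
      have hu : u = (W * M * Vᴴ) *ᵥ (fun j => w j) := by
        funext j
        have h2 := congrFun (Matrix.ofLp_toEuclideanCLM (𝕜 := ℂ) (W * M * Vᴴ) w) j
        exact h2
      have hnnu : 0 ≤ ∑ j, Complex.normSq (u j) :=
        Finset.sum_nonneg fun _ _ => Complex.normSq_nonneg _
      have hnorm_u : Real.sqrt (∑ j, Complex.normSq (u j)) = ‖T w‖ := by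
        rw [EuclideanSpace.norm_eq]
        congr 1
        refine Finset.sum_congr rfl fun j _ => ?_
        rw [← Complex.sq_norm]
      have hnorm_w : Real.sqrt (∑ i, Complex.normSq (w i)) = ‖w‖ := by
        rw [EuclideanSpace.norm_eq]
        congr 1
        refine Finset.sum_congr rfl fun i _ => ?_
        rw [← Complex.sq_norm]
      have hsq : ‖T w‖ ^ 2 = ‖star u ⬝ᵥ ((W * M * Vᴴ) *ᵥ (fun j => w j))‖ := by
        rw [← hu, dot_self_eq, Complex.norm_real, Real.norm_of_nonneg hnnu,
          ← hnorm_u, Real.sq_sqrt hnnu]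
      have h2 := master u (fun j => w j)
      rw [← hsq, hnorm_u, hnorm_w] at h2
      rcases (norm_nonneg (T w)).eq_or_lt with h0 | h0
      · rw [← h0]
        positivity
      · nlinarith [norm_nonneg w]
    refine hbound.trans ?_
    have hmax : c₀ ≤ max (lam / (2 * t)) (1 / (2 * (1 - t))) := by
      rcases le_total (lam / (2 * t)) (1 / (2 * (1 - t))) with h | h
      · calc c₀ ≤ Real.sqrt (1 / (2 * (1 - t))) * Real.sqrt (1 / (2 * (1 - t))) :=
              mul_le_mul_of_nonneg_right (Real.sqrt_le_sqrt h) (Real.sqrt_nonneg _)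
          _ = 1 / (2 * (1 - t)) := Real.mul_self_sqrt (by positivity)
          _ ≤ _ := le_max_right _ _
      · calc c₀ ≤ Real.sqrt (lam / (2 * t)) * Real.sqrt (lam / (2 * t)) :=
              mul_le_mul_of_nonneg_left (Real.sqrt_le_sqrt h) (Real.sqrt_nonneg _)
          _ = lam / (2 * t) := Real.mul_self_sqrt (by positivity)
          _ ≤ _ := le_max_left _ _
    refine hmax.trans (max_le ?_ ?_)
    · exact le_trans ((div_le_div_iff_of_pos_right (by positivity)).mpr (by linarith)) (le_max_right _ _)
    · exact le_trans ((div_le_div_iff_of_pos_right (by positivity)).mpr (by linarith)) (le_max_left _ _)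
end

section
/- Let t ∈ (0,1), λ ≥ 0, and set α = max(3/(2(1-t)), 3λ/(2t)). For positive semidefinite matrices ρ, σ on H define X = diag((1-t)ρ, tσ) and K = (1/2)[[ρ, ρ],[ρ, λσ]] as block operators on H ⊕ H. If ρ ≤ λσ, then both X and K are positive semidefinite and αX − K ≥ 0. -/
open Matrix ComplexOrder


variable {n : Type*} [Fintype n] {A B : Matrix n n ℂ}

/-- smul of PSD by nonneg complex scalar. -/
lemma psd_smul {c : ℂ} (hc : 0 ≤ c) (hA : A.PosSemidef) : (c • A).PosSemidef := by
  refine posSemidef_iff_dotProduct_mulVec.mpr ⟨?_, fun x => ?_⟩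
  · have hsc : star c = c := (IsSelfAdjoint.of_nonneg hc)
    unfold Matrix.IsHermitian
    rw [conjTranspose_smul, hA.1, hsc]
  · rw [smul_mulVec, dotProduct_smul]
    exact mul_nonneg hc (hA.dotProduct_mulVec_nonneg x)

lemma psd_diag {k : Type*} [Fintype k] {C : Matrix k k ℂ}
    (hA : A.PosSemidef) (hC : C.PosSemidef) :
    (Matrix.fromBlocks A 0 0 C).PosSemidef := by
  refine posSemidef_iff_dotProduct_mulVec.mpr ⟨?_, fun x => ?_⟩
  · unfold Matrix.IsHermitian
    rw [fromBlocks_conjTranspose, hA.1, hC.1]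
    simp
  · rw [fromBlocks_mulVec, ← Sum.elim_comp_inl_inr (star x)]
    have h1 : star x ∘ Sum.inl = star (x ∘ Sum.inl) := rfl
    have h2 : star x ∘ Sum.inr = star (x ∘ Sum.inr) := rfl
    rw [h1, h2, sumElim_dotProduct_sumElim]
    simp only [zero_mulVec, add_zero, zero_add]
    exact add_nonneg (hA.dotProduct_mulVec_nonneg _) (hC.dotProduct_mulVec_nonneg _)

lemma psd_corr {ε : ℝ} (hε : ε ^ 2 = 1) (hA : A.PosSemidef) :
    (Matrix.fromBlocks A ((ε : ℂ) • A) ((ε : ℂ) • A) A).PosSemidef := by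
  have hsc : star (ε : ℂ) = (ε : ℂ) := by simp
  refine posSemidef_iff_dotProduct_mulVec.mpr ⟨?_, fun x => ?_⟩
  · unfold Matrix.IsHermitian
    rw [fromBlocks_conjTranspose, conjTranspose_smul, hA.1, hsc]
  · have key := hA.dotProduct_mulVec_nonneg (x ∘ Sum.inl + (ε : ℂ) • (x ∘ Sum.inr))
    rw [fromBlocks_mulVec, ← Sum.elim_comp_inl_inr (star x)]
    have h1 : star x ∘ Sum.inl = star (x ∘ Sum.inl) := rfl
    have h2 : star x ∘ Sum.inr = star (x ∘ Sum.inr) := rfl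
    rw [h1, h2, sumElim_dotProduct_sumElim]
    have hε' : (ε : ℂ) * (ε : ℂ) = 1 := by
      have : (ε : ℂ) ^ 2 = 1 := by exact_mod_cast congrArg (Complex.ofReal ·) hε
      linear_combination this
    calc (0:ℂ) ≤ star (x ∘ Sum.inl + (ε:ℂ) • (x ∘ Sum.inr)) ⬝ᵥ
          A *ᵥ (x ∘ Sum.inl + (ε:ℂ) • (x ∘ Sum.inr)) := key
      _ = star (x ∘ Sum.inl) ⬝ᵥ (A *ᵥ x ∘ Sum.inl + ((ε:ℂ) • A) *ᵥ x ∘ Sum.inr)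
          + star (x ∘ Sum.inr) ⬝ᵥ (((ε:ℂ) • A) *ᵥ x ∘ Sum.inl + A *ᵥ x ∘ Sum.inr) := by
        simp only [star_add, star_smul, hsc, mulVec_add, mulVec_smul, smul_mulVec,
          dotProduct_add, add_dotProduct, smul_dotProduct, dotProduct_smul, smul_eq_mul]
        linear_combination (star (x ∘ Sum.inr) ⬝ᵥ A *ᵥ (x ∘ Sum.inr)) * hε'

theorem stmt_10 {m : ℕ} (t lam : ℝ) (ht : t ∈ Set.Ioo (0:ℝ) 1) (hlam : 0 ≤ lam)
    (ρ σ : Matrix (Fin m) (Fin m) ℂ) (hρ : ρ.PosSemidef) (hσ : σ.PosSemidef)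
    (hle : ((lam : ℂ) • σ - ρ).PosSemidef) :
    (Matrix.fromBlocks (((1 - t : ℝ) : ℂ) • ρ) 0 0 ((t : ℂ) • σ)).PosSemidef ∧
    ((1 / 2 : ℂ) • Matrix.fromBlocks ρ ρ ρ ((lam : ℂ) • σ)).PosSemidef ∧
    (((max (3 / (2 * (1 - t))) (3 * lam / (2 * t)) : ℝ) : ℂ) •
        Matrix.fromBlocks (((1 - t : ℝ) : ℂ) • ρ) 0 0 ((t : ℂ) • σ)
      - (1 / 2 : ℂ) • Matrix.fromBlocks ρ ρ ρ ((lam : ℂ) • σ)).PosSemidef := by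
  obtain ⟨ht0, ht1⟩ := ht
  have h1t : (0:ℝ) < 1 - t := by linarith
  set α := max (3 / (2 * (1 - t))) (3 * lam / (2 * t)) with hαdef
  have hα1 : 3 / (2 * (1 - t)) ≤ α := le_max_left _ _
  have hα2 : 3 * lam / (2 * t) ≤ α := le_max_right _ _
  have hc1 : (0:ℝ) ≤ α * (1 - t) - 1 := by
    have h3 : (3:ℝ) ≤ α * (2 * (1 - t)) := (div_le_iff₀ (by linarith)).1 hα1
    nlinarith
  have hc2 : (0:ℝ) ≤ α * t - lam := by
    have h3 : 3 * lam ≤ α * (2 * t) := (div_le_iff₀ (by linarith)).1 hα2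
    nlinarith
  have hreal : ∀ r : ℝ, 0 ≤ r → (0:ℂ) ≤ (r:ℂ) := fun r hr => by
    exact_mod_cast Complex.zero_le_real.2 hr
  have hhalf : (0:ℂ) ≤ (1/2:ℂ) := by
    rw [show (1/2:ℂ) = ((1/2:ℝ):ℂ) by norm_num]; exact hreal _ (by norm_num)
  have hX : (Matrix.fromBlocks (((1 - t : ℝ) : ℂ) • ρ) 0 0 ((t : ℂ) • σ)).PosSemidef :=
    psd_diag (psd_smul (hreal _ h1t.le) hρ) (psd_smul (hreal _ ht0.le) hσ)
  have hcorr1 : (Matrix.fromBlocks ρ ρ ρ ρ).PosSemidef := by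
    have := psd_corr (ε := 1) (by norm_num) hρ
    simpa using this
  have hKinner : (Matrix.fromBlocks ρ ρ ρ ((lam : ℂ) • σ)).PosSemidef := by
    have hdecomp : Matrix.fromBlocks ρ ρ ρ ((lam : ℂ) • σ)
        = Matrix.fromBlocks ρ ρ ρ ρ + Matrix.fromBlocks 0 0 0 ((lam : ℂ) • σ - ρ) := by
      rw [Matrix.fromBlocks_add]; simp
    rw [hdecomp]
    exact hcorr1.add (psd_diag Matrix.PosSemidef.zero hle)
  refine ⟨hX, psd_smul hhalf hKinner, ?_⟩
  have hcorrm : (Matrix.fromBlocks ρ (((-1:ℝ):ℂ) • ρ) (((-1:ℝ):ℂ) • ρ) ρ).PosSemidef :=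
    psd_corr (ε := -1) (by norm_num) hρ
  have hM2 : (Matrix.fromBlocks (((α * (1 - t) - 1 : ℝ) : ℂ) • ρ) 0 0
      (((α * t - lam : ℝ) : ℂ) • σ + (1/2:ℂ) • ((lam : ℂ) • σ - ρ))).PosSemidef :=
    psd_diag (psd_smul (hreal _ hc1) hρ)
      ((psd_smul (hreal _ hc2) hσ).add (psd_smul hhalf hle))
  have hid : ((α : ℂ) •
        Matrix.fromBlocks (((1 - t : ℝ) : ℂ) • ρ) 0 0 ((t : ℂ) • σ)
      - (1 / 2 : ℂ) • Matrix.fromBlocks ρ ρ ρ ((lam : ℂ) • σ))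
      = (1/2:ℂ) • Matrix.fromBlocks ρ (((-1:ℝ):ℂ) • ρ) (((-1:ℝ):ℂ) • ρ) ρ
        + Matrix.fromBlocks (((α * (1 - t) - 1 : ℝ) : ℂ) • ρ) 0 0
          (((α * t - lam : ℝ) : ℂ) • σ + (1/2:ℂ) • ((lam : ℂ) • σ - ρ)) := by
    ext (i | i) (j | j) <;>
      simp [Matrix.smul_apply, Matrix.sub_apply, Matrix.add_apply] <;> push_cast <;> ring
  rw [hid]
  exact (psd_smul hhalf hcorrm).add hM2
end

section
/- Let ρ, σ be positive definite matrices on a finite-dimensional Hilbert space H, and for t ∈ (0,1] define φ(a) = Tr(ρ) + Tr(ρ(a + a*)) + (1−t)Tr(ρ a* a) + t Tr(σ a a*) for a ∈ B(H). Then φ is convex, and a₀ ∈ B(H) achieves the infimum of φ if and only if ρ + (1−t) a₀ ρ + t σ a₀ = 0. -/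
open Matrix ComplexOrder

noncomputable def phiC {n : ℕ} (t : ℝ) (ρ σ a : Matrix (Fin n) (Fin n) ℂ) : ℂ :=
  ρ.trace + (ρ * (a + aᴴ)).trace + ((1 - t : ℝ) : ℂ) * (ρ * aᴴ * a).trace
    + (t : ℂ) * (σ * a * aᴴ).trace

noncomputable def MM {n : ℕ} (t : ℝ) (ρ σ a : Matrix (Fin n) (Fin n) ℂ) :
    Matrix (Fin n) (Fin n) ℂ :=
  ρ + ((1 - t : ℝ) : ℂ) • (a * ρ) + (t : ℂ) • (σ * a)

noncomputable def qq {n : ℕ} (t : ℝ) (ρ σ b : Matrix (Fin n) (Fin n) ℂ) : ℝ :=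
  (1 - t) * (ρ * bᴴ * b).trace.re + t * (σ * b * bᴴ).trace.re

lemma psd_trace_re_nonneg {n : ℕ} {A : Matrix (Fin n) (Fin n) ℂ} (hA : A.PosSemidef) :
    0 ≤ A.trace.re := by
  rw [Matrix.trace]
  simp only [Complex.re_sum]
  apply Finset.sum_nonneg
  intro i _
  have := hA.re_dotProduct_nonneg (Pi.single i 1)
  simpa [dotProduct, Matrix.mulVec, Pi.single_apply, Matrix.diag] using this

lemma qq_nonneg {n : ℕ} {t : ℝ} (ht : t ∈ Set.Ioc (0:ℝ) 1)
    {ρ σ : Matrix (Fin n) (Fin n) ℂ} (hρ : ρ.PosDef) (hσ : σ.PosDef)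
    (b : Matrix (Fin n) (Fin n) ℂ) : 0 ≤ qq t ρ σ b := by
  have h1 : 0 ≤ (ρ * bᴴ * b).trace.re := by
    rw [Matrix.trace_mul_cycle]
    exact psd_trace_re_nonneg (hρ.posSemidef.mul_mul_conjTranspose_same b)
  have h2 : 0 ≤ (σ * b * bᴴ).trace.re := by
    rw [Matrix.trace_mul_cycle]
    exact psd_trace_re_nonneg (hσ.posSemidef.conjTranspose_mul_mul_same b)
  have := ht.1; have := ht.2
  apply add_nonneg <;> apply mul_nonneg <;> linarith

lemma trace_mul_conjTranspose_self_re {n : ℕ} (M : Matrix (Fin n) (Fin n) ℂ) :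
    (M * Mᴴ).trace.re = ∑ i, ∑ j, Complex.normSq (M i j) := by
  rw [Matrix.trace]
  simp [Matrix.mul_apply, Matrix.diag, Complex.re_sum, Matrix.conjTranspose_apply,
    Complex.mul_conj]

lemma eq_zero_of_trace {n : ℕ} (M : Matrix (Fin n) (Fin n) ℂ)
    (h : (M * Mᴴ).trace.re ≤ 0) : M = 0 := by
  rw [trace_mul_conjTranspose_self_re] at h
  ext i j
  have h0 : ∑ i, ∑ j, Complex.normSq (M i j) = 0 :=
    le_antisymm h (Finset.sum_nonneg fun i _ => Finset.sum_nonneg fun j _ =>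
      Complex.normSq_nonneg _)
  have := (Finset.sum_eq_zero_iff_of_nonneg (fun i _ => Finset.sum_nonneg fun j _ =>
    Complex.normSq_nonneg (M i j))).mp h0 i (Finset.mem_univ i)
  have := (Finset.sum_eq_zero_iff_of_nonneg (fun j _ =>
    Complex.normSq_nonneg (M i j))).mp this j (Finset.mem_univ j)
  simpa [Complex.normSq_eq_zero] using this

lemma key {n : ℕ} (t : ℝ) (ρ σ a b : Matrix (Fin n) (Fin n) ℂ)
    (hρ : ρᴴ = ρ) (hσ : σᴴ = σ) :
    phiC t ρ σ (a + b) = phiC t ρ σ a + (MM t ρ σ a * bᴴ).trace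
      + star ((MM t ρ σ a * bᴴ).trace)
      + ((1 - t : ℝ) : ℂ) * (ρ * bᴴ * b).trace + (t : ℂ) * (σ * b * bᴴ).trace := by
  rw [show star ((MM t ρ σ a * bᴴ).trace) = ((MM t ρ σ a * bᴴ)ᴴ).trace from
    (Matrix.trace_conjTranspose _).symm]
  simp only [phiC, MM, conjTranspose_add, conjTranspose_mul, conjTranspose_smul,
    conjTranspose_conjTranspose, hρ, hσ, Matrix.mul_add, Matrix.add_mul, trace_add,
    Matrix.smul_mul, Matrix.mul_smul, trace_smul, star_trivial, Complex.star_def,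
    Complex.conj_ofReal, smul_eq_mul]
  rw [trace_mul_cycle ρ bᴴ a, trace_mul_cycle ρ aᴴ b, trace_mul_cycle ρ bᴴ b,
      trace_mul_cycle σ a bᴴ, trace_mul_cycle σ b aᴴ, trace_mul_cycle σ b bᴴ]
  rw [Matrix.trace_mul_comm ρ b, Matrix.mul_assoc b ρ aᴴ, Matrix.trace_mul_comm (aᴴ * σ) b]
  ring

lemma keyR {n : ℕ} (t : ℝ) (ρ σ a b : Matrix (Fin n) (Fin n) ℂ)
    (hρ : ρᴴ = ρ) (hσ : σᴴ = σ) (s : ℝ) :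
    (phiC t ρ σ (a + (s : ℂ) • b)).re = (phiC t ρ σ a).re
      + 2 * s * (MM t ρ σ a * bᴴ).trace.re + s ^ 2 * qq t ρ σ b := by
  have h := key t ρ σ a ((s : ℂ) • b) hρ hσ
  have e1 : ((s:ℂ) • b)ᴴ = (s:ℂ) • bᴴ := by
    simp [conjTranspose_smul, Complex.star_def, Complex.conj_ofReal]
  rw [h, e1]
  simp only [Matrix.mul_smul, Matrix.smul_mul, trace_smul, smul_eq_mul, qq]
  simp [Complex.add_re, Complex.mul_re, Complex.ofReal_re, Complex.ofReal_im, Complex.conj_re,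
    Complex.conj_im]
  ring

lemma rsmul {n : ℕ} (s : ℝ) (b : Matrix (Fin n) (Fin n) ℂ) : s • b = (s:ℂ) • b := by
  ext i j; simp [Complex.real_smul]

theorem stmt_16 {n : ℕ} (t : ℝ) (ht : t ∈ Set.Ioc (0:ℝ) 1)
    (ρ σ : Matrix (Fin n) (Fin n) ℂ) (hρ : ρ.PosDef) (hσ : σ.PosDef) :
    ConvexOn ℝ Set.univ (fun a : Matrix (Fin n) (Fin n) ℂ =>
      (ρ.trace + (ρ * (a + aᴴ)).trace + ((1 - t : ℝ) : ℂ) * (ρ * aᴴ * a).trace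
        + (t : ℂ) * (σ * a * aᴴ).trace).re) ∧
    ∀ a₀ : Matrix (Fin n) (Fin n) ℂ,
      (∀ a : Matrix (Fin n) (Fin n) ℂ,
        (ρ.trace + (ρ * (a₀ + a₀ᴴ)).trace + ((1 - t : ℝ) : ℂ) * (ρ * a₀ᴴ * a₀).trace
          + (t : ℂ) * (σ * a₀ * a₀ᴴ).trace).re ≤
        (ρ.trace + (ρ * (a + aᴴ)).trace + ((1 - t : ℝ) : ℂ) * (ρ * aᴴ * a).trace
          + (t : ℂ) * (σ * a * aᴴ).trace).re)
      ↔ ρ + ((1 - t : ℝ) : ℂ) • (a₀ * ρ) + (t : ℂ) • (σ * a₀) = 0 := by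
  have hρh : ρᴴ = ρ := hρ.isHermitian
  have hσh : σᴴ = σ := hσ.isHermitian
  constructor
  · refine ⟨convex_univ, ?_⟩
    intro x _ y _ l m hl hm hlm
    have hm' : m = 1 - l := by linarith
    subst hm'
    set c := l • x + (1 - l) • y with hc
    have hx : c + ((1 - l : ℝ):ℂ) • (x - y) = x := by
      rw [← rsmul]
      have : c + (1 - l) • (x - y) = (l + (1 - l)) • x := by
        rw [hc]; module
      rw [this]; norm_num
    have hy : c + ((-l : ℝ):ℂ) • (x - y) = y := by
      rw [← rsmul]
      have : c + (-l) • (x - y) = (l + (1 - l)) • y := by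
        rw [hc]; module
      rw [this]; norm_num
    have h1 := keyR t ρ σ c (x - y) hρh hσh (1 - l)
    have h2 := keyR t ρ σ c (x - y) hρh hσh (-l)
    rw [hx] at h1
    rw [hy] at h2
    have hQ := qq_nonneg ht hρ hσ (x - y)
    show (phiC t ρ σ c).re ≤ l • (phiC t ρ σ x).re + (1 - l) • (phiC t ρ σ y).re
    simp only [smul_eq_mul]
    rw [h1, h2]
    nlinarith [mul_nonneg (mul_nonneg hl hm) hQ]
  · intro a₀
    constructor
    · intro h
      set M := MM t ρ σ a₀ with hMdef
      set T := (M * Mᴴ).trace.re with hT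
      set Q := qq t ρ σ M with hQdef
      have hQ : 0 ≤ Q := qq_nonneg ht hρ hσ M
      have hineq : ∀ s : ℝ, 0 ≤ 2 * s * T + s ^ 2 * Q := by
        intro s
        have hk := keyR t ρ σ a₀ M hρh hσh s
        have := h (a₀ + (s:ℂ) • M)
        change (phiC t ρ σ a₀).re ≤ (phiC t ρ σ (a₀ + (s:ℂ) • M)).re at this
        rw [hk] at this
        linarith
      have hTle : T ≤ 0 := by
        by_contra hc
        push_neg at hc
        have hQ1 : (0:ℝ) < Q + 1 := by linarith
        have hu : T / (Q + 1) * (Q + 1) = T := div_mul_cancel₀ _ (ne_of_gt hQ1)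
        have hupos : 0 < T / (Q + 1) := div_pos hc hQ1
        have := hineq (-(T / (Q + 1)))
        nlinarith [sq_nonneg (T / (Q + 1))]
      exact eq_zero_of_trace M hTle
    · intro hM a
      have hM' : MM t ρ σ a₀ = 0 := hM
      have e := key t ρ σ a₀ (a - a₀) hρh hσh
      rw [show a₀ + (a - a₀) = a from by abel, hM', Matrix.zero_mul, trace_zero,
        star_zero] at e
      have hQ := qq_nonneg ht hρ hσ (a - a₀)
      show (phiC t ρ σ a₀).re ≤ (phiC t ρ σ a).re
      rw [e]
      simp only [qq] at hQ
      simp only [add_zero, Complex.add_re, Complex.mul_re, Complex.ofReal_re,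
        Complex.ofReal_im, zero_mul, sub_zero]
      linarith
end
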